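/- Let T be a finite tree on n vertices. The hairing H(T) is palindromic if and only if n is even, and H(T) is antipalindromic if and only if n is odd. -/

import Mathlib

open Polynomial

/-- The characteristic polynomial (of the adjacency matrix) of a finite simple graph. -/
noncomputable def charPoly {V : Type*} [Finite V] (G : SimpleGraph V) : Polynomial ℤ :=
  letI := Fintype.ofFinite V
  letI := Classical.decEq V
  letI := Classical.decRel G.Adj
  (SimpleGraph.adjMatrix ℤ G).charpoly

/-- `G` is palindromic: writing `χ_G(λ) = Σ a_i λ^(n-i)`, we have `a_i = a_(n-i)`;
equivalently the `i`-th and `(n-i)`-th coefficients agree for all `i ≤ n`. -/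
def IsPalindromic {V : Type*} [Finite V] (G : SimpleGraph V) : Prop :=
  ∀ i ≤ Nat.card V, (charPoly G).coeff i = (charPoly G).coeff (Nat.card V - i)

/-- `G` is antipalindromic: writing `χ_G(λ) = Σ a_i λ^(n-i)`, we have `a_i = -a_(n-i)`. -/
def IsAntipalindromic {V : Type*} [Finite V] (G : SimpleGraph V) : Prop :=
  ∀ i ≤ Nat.card V, (charPoly G).coeff i = -(charPoly G).coeff (Nat.card V - i)

/-- The hairing of `G`: attach a pendant vertex to every vertex of `G`.
Vertices `(u, false)` form the original graph and `(u, true)` is the pendant at `u`. -/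
def hairing {V : Type*} (G : SimpleGraph V) : SimpleGraph (V × Bool) where
  Adj a b := (a.2 = false ∧ b.2 = false ∧ G.Adj a.1 b.1) ∨ (a.1 = b.1 ∧ a.2 ≠ b.2)
  symm := by
    constructor
    rintro a b (⟨ha, hb, hadj⟩ | ⟨h1, h2⟩)
    · exact Or.inl ⟨hb, ha, hadj.symm⟩
    · exact Or.inr ⟨h1.symm, h2.symm⟩
  loopless := by
    constructor
    rintro a (⟨_, _, hadj⟩ | ⟨_, h⟩)
    · exact G.irrefl hadj
    · exact h rfl


section Aux

open Matrix

def hairEquiv (V : Type*) : V × Bool ≃ V ⊕ V where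
  toFun x := cond x.2 (Sum.inr x.1) (Sum.inl x.1)
  invFun s := Sum.elim (fun u => (u, false)) (fun u => (u, true)) s
  left_inv := by rintro ⟨u, _|_⟩ <;> rfl
  right_inv := by rintro (u|u) <;> rfl

lemma adjMatrix_hairing {V : Type*} [DecidableEq V] (T : SimpleGraph V) [DecidableRel T.Adj]
    [DecidableRel (hairing T).Adj] :
    (hairing T).adjMatrix ℤ =
      (fromBlocks (T.adjMatrix ℤ) (1 : Matrix V V ℤ) (1 : Matrix V V ℤ) (0 : Matrix V V ℤ)).submatrix
        (hairEquiv V) (hairEquiv V) := by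
  ext ⟨u, b⟩ ⟨v, c⟩
  cases b <;> cases c <;>
    simp [hairEquiv, hairing, Matrix.one_apply, SimpleGraph.adjMatrix_apply, Matrix.submatrix,
      eq_comm, - Bool.false_eq] <;> aesop

abbrev MX (m : Type*) := Matrix m m (Polynomial ℤ)

section DetLemmas

variable {m : Type*} [Fintype m] [DecidableEq m]

lemma det_J : (fromBlocks (0 : MX m) (1 : MX m) (1 : MX m) (0 : MX m)).det
    = (-1) ^ Fintype.card m := by
  have e : fromBlocks (1 : MX m) (1 : MX m) (0 : MX m) (1 : MX m) *
        fromBlocks (1 : MX m) (0 : MX m) (-1 : MX m) (1 : MX m) *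
        fromBlocks (1 : MX m) (1 : MX m) (0 : MX m) (1 : MX m) *
        fromBlocks (-1 : MX m) (0 : MX m) (0 : MX m) (1 : MX m)
      = fromBlocks (0 : MX m) (1 : MX m) (1 : MX m) (0 : MX m) := by
    simp [fromBlocks_multiply]
  rw [← e, det_mul, det_mul, det_mul]
  simp [det_fromBlocks_zero₂₁, det_fromBlocks_zero₁₂, Matrix.det_neg]

lemma det_block_charpoly (N : MX m) :
    (fromBlocks ((X:ℤ[X]) • 1 - N) (-1 : MX m) (-1 : MX m) ((X:ℤ[X]) • (1 : MX m))).det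
      = (((X:ℤ[X])^2 - 1) • 1 - (X:ℤ[X]) • N).det := by
  set x : ℤ[X] := X with hx
  set P : MX m := x • 1 - N with hP
  set Q : MX m := x • P - 1 with hQ
  have e1 : fromBlocks P (-1 : MX m) (-1 : MX m) (x • (1 : MX m)) *
        fromBlocks (1 : MX m) (x • (1 : MX m)) (0 : MX m) (1 : MX m)
      = fromBlocks P Q (-1 : MX m) (0 : MX m) := by
    simp [fromBlocks_multiply, Matrix.mul_smul, hQ, sub_eq_add_neg]
  have e2 : fromBlocks (1 : MX m) P (0 : MX m) (1 : MX m) * fromBlocks P Q (-1 : MX m) (0 : MX m)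
      = fromBlocks (0 : MX m) Q (-1 : MX m) (0 : MX m) := by
    simp [fromBlocks_multiply, sub_eq_add_neg, add_comm]
  have e3 : fromBlocks Q (0 : MX m) (0 : MX m) (-1 : MX m) *
        fromBlocks (0 : MX m) (1 : MX m) (1 : MX m) (0 : MX m)
      = fromBlocks (0 : MX m) Q (-1 : MX m) (0 : MX m) := by
    simp [fromBlocks_multiply]
  have hdet : (fromBlocks P (-1 : MX m) (-1 : MX m) (x • (1 : MX m))).det = Q.det := by
    have d1 : (fromBlocks (1 : MX m) (x • (1 : MX m)) (0 : MX m) (1 : MX m)).det = 1 := by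
      rw [det_fromBlocks_zero₂₁]; simp
    have d2 : (fromBlocks (1 : MX m) P (0 : MX m) (1 : MX m)).det = 1 := by
      rw [det_fromBlocks_zero₂₁]; simp
    have d3 : (fromBlocks Q (0 : MX m) (0 : MX m) (-1 : MX m)).det
        = Q.det * (-1) ^ Fintype.card m := by
      rw [det_fromBlocks_zero₂₁]; simp [Matrix.det_neg]
    have c1 := congrArg Matrix.det e1
    have c2 := congrArg Matrix.det e2
    have c3 := congrArg Matrix.det e3
    rw [det_mul, d1, mul_one] at c1
    rw [det_mul, d2, one_mul] at c2
    rw [det_mul, d3, det_J] at c3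
    rw [c1, c2, ← c3, mul_assoc, ← mul_pow]
    simp
  rw [hdet]
  congr 1
  rw [hQ, hP]
  module

end DetLemmas

section Rev

variable {m : Type*} [Fintype m] [DecidableEq m]

lemma det_block_rev (N : MX m) :
    ((1 : Matrix (m ⊕ m) (m ⊕ m) ℤ[X]) - (X:ℤ[X]) • fromBlocks N (1 : MX m) (1 : MX m) (0 : MX m)).det
      = (-1) ^ Fintype.card m * (((X:ℤ[X])^2 - 1) • 1 + (X:ℤ[X]) • N).det := by
  set x : ℤ[X] := X with hx
  have h1 : (1 : Matrix (m ⊕ m) (m ⊕ m) ℤ[X]) - x • fromBlocks N (1 : MX m) (1 : MX m) (0 : MX m)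
      = fromBlocks ((1 : MX m) - x • N) (-(x • (1 : MX m))) (-(x • (1 : MX m))) (1 : MX m) := by
    rw [sub_eq_add_neg, fromBlocks_smul, fromBlocks_neg, ← fromBlocks_one, fromBlocks_add]
    simp [sub_eq_add_neg]
  rw [h1, det_fromBlocks_one₂₂]
  have h2 : (1 : MX m) - x • N - -(x • (1 : MX m)) * -(x • (1 : MX m))
      = -(((x:ℤ[X])^2 - 1) • 1 + x • N) := by
    rw [neg_mul_neg, Matrix.smul_mul, Matrix.mul_smul, Matrix.one_mul, smul_smul]
    module
  rw [h2, Matrix.det_neg]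

lemma det_conj_diag (A : Matrix m m ℤ) (f : m → Bool) (hf : ∀ u v, A u v ≠ 0 → f u ≠ f v)
    (c : ℤ[X]) :
    (c • (1 : MX m) + (X:ℤ[X]) • A.map (C : ℤ → ℤ[X])).det
      = (c • (1 : MX m) - (X:ℤ[X]) • A.map (C : ℤ → ℤ[X])).det := by
  set x : ℤ[X] := X with hx
  set D : MX m := Matrix.diagonal (fun v => if f v then (1 : ℤ[X]) else -1) with hD
  set N : MX m := A.map (C : ℤ → ℤ[X]) with hN
  have hDD : D * D = 1 := by
    rw [hD, Matrix.diagonal_mul_diagonal]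
    convert Matrix.diagonal_one
    rename_i v
    by_cases h : f v <;> simp [h]
  have hDND : D * N * D = -N := by
    ext u v
    rw [hD, hN]
    simp only [Matrix.diagonal_mul, Matrix.mul_diagonal, Matrix.neg_apply, Matrix.map_apply]
    by_cases h : A u v = 0
    · simp [h]
    · have := hf u v h
      cases hu : f u <;> cases hv : f v <;> simp_all
  have key : D * (c • (1 : MX m) + x • N) * D = c • (1 : MX m) - x • N := by
    rw [Matrix.mul_add, Matrix.add_mul, Matrix.mul_smul, Matrix.smul_mul,
      Matrix.mul_smul, Matrix.smul_mul, Matrix.mul_one, hDD, hDND]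
    module
  calc (c • (1 : MX m) + x • N).det
      = D.det * (c • (1 : MX m) + x • N).det * D.det := by
        have h : D.det * D.det = 1 := by rw [← det_mul, hDD, det_one]
        rw [mul_right_comm, h, one_mul]
    _ = (D * (c • (1 : MX m) + x • N) * D).det := by rw [det_mul, det_mul]
    _ = _ := by rw [key]

end Rev

section Key

variable {V : Type*}

lemma key_rev [Fintype V] [DecidableEq V] [Fintype (V × Bool)] [DecidableEq (V × Bool)]
    (T : SimpleGraph V) [DecidableRel T.Adj] [DecidableRel (hairing T).Adj]
    (f : V → Bool) (hf : ∀ u v, T.Adj u v → f u ≠ f v) :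
    ((hairing T).adjMatrix ℤ).charpoly.reverse
      = (-1 : ℤ[X]) ^ (Fintype.card V) * ((hairing T).adjMatrix ℤ).charpoly := by
  set A : Matrix V V ℤ := T.adjMatrix ℤ with hA
  set A' : MX V := A.map (C : ℤ → ℤ[X]) with hA'
  set B : Matrix (V ⊕ V) (V ⊕ V) ℤ := fromBlocks A (1 : Matrix V V ℤ) (1 : Matrix V V ℤ) 0 with hB
  have hsub : (hairing T).adjMatrix ℤ = B.submatrix (hairEquiv V) (hairEquiv V) :=
    adjMatrix_hairing T
  -- charpoly of the hairing equals charpoly of the block matrix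
  have hcp : ((hairing T).adjMatrix ℤ).charpoly = B.charpoly := by
    rw [hsub]
    have := Matrix.charpoly_reindex (hairEquiv V).symm B
    rwa [Matrix.reindex_apply, Equiv.symm_symm] at this
  -- charpoly of the block matrix
  have hcp2 : B.charpoly = (((X:ℤ[X])^2 - 1) • 1 - (X:ℤ[X]) • A').det := by
    rw [← det_block_charpoly (m := V) A']
    rw [Matrix.charpoly, Matrix.charmatrix]
    congr 1
    have hscalar : Matrix.scalar (V ⊕ V) (X : ℤ[X]) =
        fromBlocks ((X:ℤ[X]) • (1 : MX V)) 0 0 ((X:ℤ[X]) • (1 : MX V)) := by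
      ext (i | i) (j | j) <;>
        simp [Matrix.scalar_apply, Matrix.diagonal_apply, Matrix.one_apply, Sum.inl.injEq] <;>
        aesop
    rw [RingHom.mapMatrix_apply, hB, fromBlocks_map, hscalar]
    rw [show ((1 : Matrix V V ℤ).map (C : ℤ → ℤ[X])) = (1 : MX V) from Matrix.map_one _ (map_zero C) (map_one C)]
    rw [show ((0 : Matrix V V ℤ).map (C : ℤ → ℤ[X])) = (0 : MX V) from Matrix.map_zero _ (map_zero C)]
    rw [sub_eq_add_neg, fromBlocks_neg, fromBlocks_add]
    congr 1 <;> simp [sub_eq_add_neg, hA']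
  -- reverse of the charpoly
  have hrev : ((hairing T).adjMatrix ℤ).charpoly.reverse
      = (-1 : ℤ[X]) ^ (Fintype.card V) * (((X:ℤ[X])^2 - 1) • 1 + (X:ℤ[X]) • A').det := by
    rw [Matrix.reverse_charpoly, Matrix.charpolyRev, hsub]
    have h3 : (1 : Matrix (V × Bool) (V × Bool) ℤ[X])
          - (X : ℤ[X]) • (B.submatrix (hairEquiv V) (hairEquiv V)).map (C : ℤ → ℤ[X])
        = ((1 : Matrix (V ⊕ V) (V ⊕ V) ℤ[X]) - (X : ℤ[X]) • B.map (C : ℤ → ℤ[X])).submatrix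
            (hairEquiv V) (hairEquiv V) := by
      ext i j
      by_cases h : i = j <;>
        simp [h, Matrix.one_apply, Matrix.submatrix_apply, Matrix.map_apply]
    rw [h3, Matrix.det_submatrix_equiv_self]
    have h2 : (B.map (C : ℤ → ℤ[X])) = fromBlocks A' (1 : MX V) (1 : MX V) (0 : MX V) := by
      ext (i | i) (j | j) <;>
        simp [hB, hA', Matrix.map_apply, Matrix.one_apply, apply_ite (C : ℤ → ℤ[X])]
    rw [h2, det_block_rev]
  -- bipartite conjugation
  have hAf : ∀ u v, A u v ≠ 0 → f u ≠ f v := by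
    intro u v h
    rw [hA, SimpleGraph.adjMatrix_apply] at h
    by_cases hadj : T.Adj u v
    · exact hf u v hadj
    · simp [hadj] at h
  have hconj := det_conj_diag A f hAf (((X:ℤ[X])^2 - 1))
  rw [← hA'] at hconj
  rw [hrev, hconj, ← hcp2, ← hcp]

end Key

section Coloring

lemma tree_coloring {V : Type*} (T : SimpleGraph V) (hT : T.IsTree) :
    ∃ f : V → Bool, ∀ u v, T.Adj u v → f u ≠ f v := by
  classical
  have hconn := hT.isConnected
  obtain ⟨r⟩ := hconn.nonempty
  refine ⟨fun v => decide (T.dist r v % 2 = 1), fun u v huv => ?_⟩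
  have hne : T.dist r u ≠ T.dist r v := by
    intro heq
    obtain ⟨p, hp, hlp⟩ := hconn.exists_path_of_dist r u
    obtain ⟨q, hq, hlq⟩ := hconn.exists_path_of_dist r v
    by_cases hmem : v ∈ p.support
    · have h1 : T.dist r v ≤ (p.takeUntil v hmem).length := SimpleGraph.dist_le _
      have h2 : (p.takeUntil v hmem).length + (p.dropUntil v hmem).length = p.length := by
        have := congrArg SimpleGraph.Walk.length (p.take_spec hmem)
        rwa [SimpleGraph.Walk.length_append] at this
      have h3 : (p.dropUntil v hmem).length ≠ 0 := by
        intro h0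
        exact huv.ne' (SimpleGraph.Walk.eq_of_length_eq_zero h0)
      omega
    · have hp' : (p.concat huv).IsPath := by
        rw [SimpleGraph.Walk.isPath_def, SimpleGraph.Walk.support_concat]
        simp [List.nodup_append, hp.support_nodup, hmem]
        exact fun a ha hav => hmem (hav ▸ ha)
      obtain ⟨w, -, hwu⟩ := hT.existsUnique_path r v
      have e1 := hwu _ hp'
      have e2 := hwu _ hq
      have := congrArg SimpleGraph.Walk.length (e1.trans e2.symm)
      rw [SimpleGraph.Walk.length_concat] at this
      omega
  have htri1 : T.dist r v ≤ T.dist r u + 1 := by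
    have h := hconn.dist_triangle (u := r) (v := u) (w := v)
    have : T.dist u v ≤ 1 := by
      have := SimpleGraph.dist_le huv.toWalk
      simpa using this
    omega
  have htri2 : T.dist r u ≤ T.dist r v + 1 := by
    have h := hconn.dist_triangle (u := r) (v := v) (w := u)
    have : T.dist v u ≤ 1 := by
      have := SimpleGraph.dist_le huv.symm.toWalk
      simpa using this
    omega
  simp only [ne_eq, decide_eq_decide]
  omega

end Coloring


end Aux

/-- For a finite tree `T` on `n` vertices: `H(T)` is palindromic iff `n` is even,
and `H(T)` is antipalindromic iff `n` is odd. -/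
theorem hairing_tree_palindromic_iff {V : Type*} [Finite V] (T : SimpleGraph V)
    (hT : T.IsTree) :
    (IsPalindromic (hairing T) ↔ Even (Nat.card V)) ∧
      (IsAntipalindromic (hairing T) ↔ Odd (Nat.card V)) := by
  letI iFV : Fintype V := Fintype.ofFinite V
  letI iDV : DecidableEq V := Classical.decEq V
  letI iRV : DecidableRel T.Adj := Classical.decRel _
  letI iF : Fintype (V × Bool) := Fintype.ofFinite (V × Bool)
  letI iD : DecidableEq (V × Bool) := Classical.decEq (V × Bool)
  letI iR : DecidableRel (hairing T).Adj := Classical.decRel _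
  obtain ⟨f, hf⟩ := tree_coloring T hT
  have hEq : charPoly (hairing T) = ((hairing T).adjMatrix ℤ).charpoly := rfl
  have hkey : (charPoly (hairing T)).reverse
      = (-1 : ℤ[X]) ^ (Fintype.card V) * charPoly (hairing T) := by
    rw [hEq]; exact key_rev T f hf
  set n := Nat.card V with hn
  set N := Nat.card (V × Bool) with hN
  have hcardV : n = Fintype.card V := Nat.card_eq_fintype_card
  have hdeg : (charPoly (hairing T)).natDegree = N := by
    rw [hEq, Matrix.charpoly_natDegree_eq_dim, hN, Nat.card_eq_fintype_card]
  have hlead : (charPoly (hairing T)).coeff N = 1 := by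
    rw [← hdeg]
    exact ((hairing T).adjMatrix ℤ).charpoly_monic.coeff_natDegree
  have hco : ∀ i ≤ N, (charPoly (hairing T)).coeff (N - i)
      = (-1 : ℤ) ^ n * (charPoly (hairing T)).coeff i := by
    intro i hi
    have h1 : (charPoly (hairing T)).reverse.coeff i
        = (charPoly (hairing T)).coeff (N - i) := by
      rw [Polynomial.coeff_reverse, hdeg, Polynomial.revAt_le hi]
    rw [← h1, hkey]
    have h2 : ((-1 : ℤ[X]) ^ Fintype.card V) = Polynomial.C ((-1 : ℤ) ^ n) := by
      rw [map_pow, map_neg, Polynomial.C_1, hcardV]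
    rw [h2, Polynomial.coeff_C_mul]
  constructor
  · constructor
    · intro hpal
      by_contra hodd
      have hodd' : Odd n := Nat.not_even_iff_odd.mp hodd
      have h1 := hco 0 (Nat.zero_le _)
      rw [Nat.sub_zero, hlead, hodd'.neg_one_pow] at h1
      have h2 := hpal 0 (Nat.zero_le _)
      rw [Nat.sub_zero, hlead] at h2
      rw [h2] at h1
      omega
    · intro heven i hi
      rw [hco i hi, heven.neg_one_pow, one_mul]
  · constructor
    · intro hanti
      by_contra heven
      have heven' : Even n := Nat.not_odd_iff_even.mp heven
      have h1 := hco 0 (Nat.zero_le _)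
      rw [Nat.sub_zero, hlead, heven'.neg_one_pow] at h1
      have h2 := hanti 0 (Nat.zero_le _)
      rw [Nat.sub_zero, hlead] at h2
      rw [h2] at h1
      omega
    · intro hodd i hi
      rw [hco i hi, hodd.neg_one_pow]
      ring
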